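/- Let S be a virtual flat biquandle, i.e. a set with two binary operations written S_b(a) = a*b and T_b(a) = a∘b satisfying: (i) S_a S_b = S_b S_a, T_a T_b = T_b T_a, S_a T_b = T_b S_a as maps; (ii) S_a = S_{T_b(a)} = S_{S_b(a)} and T_a = T_{S_b(a)} = T_{T_b(a)}; (iii) T_a S_a = S_a T_a = id. Then for every a in S there exist unique x, y in S such that a∘x = x, x*a = a, y∘a = a, and a*y = y; namely x = a∘a and y = a*a. -/
import Mathlib


/-- A virtual flat biquandle: a set with two binary operations
`star a b = S_b(a)` and `circ a b = T_b(a)` satisfying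
(i) `S_a S_b = S_b S_a`, `T_a T_b = T_b T_a`, `S_a T_b = T_b S_a`;
(ii) `S_a = S_{T_b(a)} = S_{S_b(a)}`, `T_a = T_{S_b(a)} = T_{T_b(a)}`;
(iii) `T_a S_a = S_a T_a = id`. -/
structure VFB (S : Type*) where
  star : S → S → S
  circ : S → S → S
  star_star_comm : ∀ a b x, star (star x b) a = star (star x a) b
  circ_circ_comm : ∀ a b x, circ (circ x b) a = circ (circ x a) b
  star_circ_comm : ∀ a b x, star (circ x b) a = circ (star x a) b
  star_circ_invar : ∀ a b x, star x (circ a b) = star x a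
  star_star_invar : ∀ a b x, star x (star a b) = star x a
  circ_star_invar : ∀ a b x, circ x (star a b) = circ x a
  circ_circ_invar : ∀ a b x, circ x (circ a b) = circ x a
  circ_star : ∀ a x, circ (star x a) a = x
  star_circ : ∀ a x, star (circ x a) a = x

theorem stmt_7 {S : Type*} (V : VFB S) (a : S) :
    (∃! x : S, V.circ a x = x ∧ V.star x a = a) ∧
    (∃! y : S, V.circ y a = a ∧ V.star a y = y) ∧
    (V.circ a (V.circ a a) = V.circ a a ∧ V.star (V.circ a a) a = a) ∧
    (V.circ (V.star a a) a = a ∧ V.star a (V.star a a) = V.star a a) := by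
  refine ⟨⟨V.circ a a, ⟨V.circ_circ_invar a a a, V.star_circ a a⟩, ?_⟩,
    ⟨V.star a a, ⟨V.circ_star a a, V.star_star_invar a a a⟩, ?_⟩,
    ⟨V.circ_circ_invar a a a, V.star_circ a a⟩,
    ⟨V.circ_star a a, V.star_star_invar a a a⟩⟩
  · rintro x ⟨-, hx⟩
    have := V.circ_star a x
    rw [hx] at this
    exact this.symm
  · rintro y ⟨hy, -⟩
    have := V.star_circ a y
    rw [hy] at this
    exact this.symm
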